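/- arXiv:math/0212357 — 5 statements merged into one kernel-verified Lean document; each statement's English description precedes it below -/
import Mathlib

section
/- Let A be a Hurwitz real n×n matrix, b ∈ ℝⁿ, c ∈ ℝⁿ, and assume the impulse response h(t) = cᵀ e^{At} b satisfies h(t) ≥ 0 for all t ≥ 0. For a bounded measurable input u : [0,∞) → ℝ define the zero-initial-state output y(t) = ∫₀ᵗ h(t−s) u(s) ds. Then the L^∞-to-L^∞ induced gain equals the steady-state gain: (i) for every bounded measurable u and every t ≥ 0, |y(t)| ≤ (−cᵀ A⁻¹ b) · sup_{s≥0} |u(s)|, and (ii) the constant −cᵀ A⁻¹ b is optimal, i.e. sup over bounded measurable u with sup_{s}|u(s)| ≤ 1 of sup_{t≥0} |y(t)| equals −cᵀ A⁻¹ b. (Remark 3.2: for asymptotically stable SISO monotone linear systems, the L^∞ induced gain equals the steady-state gain −cᵀA⁻¹b.) -/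
open Matrix MeasureTheory Set
open Filter Polynomial
open scoped Topology

/-- A closed convex cone in `ℝ^d`. -/
def IsClosedConvexCone {d : ℕ} (K : Set (Fin d → ℝ)) : Prop :=
  IsClosed K ∧ Convex ℝ K ∧ ∀ c : ℝ, 0 ≤ c → ∀ x ∈ K, c • x ∈ K

/-- The matrix exponential `e^A`. -/
noncomputable def mexp {n : ℕ} (A : Matrix (Fin n) (Fin n) ℝ) : Matrix (Fin n) (Fin n) ℝ :=
  NormedSpace.exp A

/-- `μ : ℂ` is a (complex) eigenvalue of the real matrix `A`. -/
def IsEigenvalue {n : ℕ} (A : Matrix (Fin n) (Fin n) ℝ) (μ : ℂ) : Prop :=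
  Module.End.HasEigenvalue (Matrix.toLin' (A.map (Complex.ofReal))) μ

/-- A real square matrix is Hurwitz if all its complex eigenvalues have negative real part. -/
def Hurwitz {n : ℕ} (A : Matrix (Fin n) (Fin n) ℝ) : Prop :=
  ∀ μ : ℂ, IsEigenvalue A μ → μ.re < 0

attribute [local instance] Matrix.linftyOpNormedRing Matrix.linftyOpNormedAlgebra

namespace Stmt6Aux

variable {n : ℕ}

/-- `mulVec` by a fixed vector, as a continuous linear map in the matrix. -/
noncomputable def mvCLM (𝕜 : Type*) [RCLike 𝕜] (n : ℕ) (x : Fin n → 𝕜) :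
    Matrix (Fin n) (Fin n) 𝕜 →L[𝕜] (Fin n → 𝕜) :=
  LinearMap.toContinuousLinearMap
    { toFun := fun M => M.mulVec x
      map_add' := fun M N => Matrix.add_mulVec M N x
      map_smul' := fun a M => Matrix.smul_mulVec a M x }

@[simp] lemma mvCLM_apply {𝕜 : Type*} [RCLike 𝕜] (x : Fin n → 𝕜)
    (M : Matrix (Fin n) (Fin n) 𝕜) : mvCLM 𝕜 n x M = M.mulVec x := rfl

lemma step (N : Matrix (Fin n) (Fin n) ℂ) (j : ℕ) (x : Fin n → ℂ)
    (hx : (N ^ (j + 1)).mulVec x = 0) :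
    (N ^ j).mulVec ((NormedSpace.exp N).mulVec x) = (N ^ j).mulVec x := by
  have hvan : ∀ k, j + 1 ≤ k → (N ^ k).mulVec x = 0 := by
    intro k hk
    have h1 : N ^ k = N ^ (k - (j + 1)) * N ^ (j + 1) := by
      rw [← pow_add]; congr 1; omega
    rw [h1, ← Matrix.mulVec_mulVec, hx, Matrix.mulVec_zero]
  have hsum : Summable fun k : ℕ => ((k.factorial : ℂ))⁻¹ • N ^ k :=
    NormedSpace.expSeries_summable' N
  have h2 : (NormedSpace.exp N).mulVec x
      = ∑ k ∈ Finset.range (j + 1), ((k.factorial : ℂ))⁻¹ • (N ^ k).mulVec x := by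
    have h1 := (mvCLM ℂ n x).map_tsum hsum
    simp only [mvCLM_apply, Matrix.smul_mulVec] at h1
    rw [NormedSpace.exp_eq_tsum ℂ, h1]
    refine tsum_eq_sum ?_
    intro k hk
    have hk' : j + 1 ≤ k := by simpa [Finset.mem_range, not_lt] using hk
    simp [hvan k hk']
  rw [h2, ← Matrix.mulVecLin_apply, map_sum]
  rw [Finset.sum_eq_single 0]
  · simp
  · intro k hk hk0
    have : (N ^ (j + k)).mulVec x = 0 := hvan _ (by omega)
    simp [Matrix.mulVec_smul, Matrix.mulVec_mulVec, ← pow_add, this]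
  · intro h; exact absurd (Finset.mem_range.mpr (by omega)) h

lemma kill (N : Matrix (Fin n) (Fin n) ℂ) (m : ℕ) (x : Fin n → ℂ)
    (hx : (N ^ m).mulVec x = 0) :
    ((NormedSpace.exp N - 1) ^ m).mulVec x = 0 := by
  induction m generalizing x with
  | zero => simpa using hx
  | succ m ih =>
    have hy : (N ^ m).mulVec ((NormedSpace.exp N).mulVec x - x) = 0 := by
      rw [Matrix.mulVec_sub, step N m x hx, sub_self]
    have h1 : ((NormedSpace.exp N - 1) ^ (m + 1)).mulVec x
        = ((NormedSpace.exp N - 1) ^ m).mulVec ((NormedSpace.exp N).mulVec x - x) := by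
      rw [pow_succ, ← Matrix.mulVec_mulVec, Matrix.sub_mulVec, Matrix.one_mulVec]
    rw [h1, ih _ hy]

end Stmt6Aux

namespace Stmt6Aux

variable {n : ℕ}

lemma pow_sub_smul_apply (P : Matrix (Fin n) (Fin n) ℂ) (a : ℂ) (k : ℕ) (y : Fin n → ℂ) :
    ((Matrix.toLin' P - a • 1) ^ k) y = ((P - a • 1) ^ k).mulVec y := by
  induction k generalizing y with
  | zero => simp
  | succ k ih =>
    rw [pow_succ, pow_succ, Module.End.mul_apply, ← Matrix.mulVec_mulVec]
    have h1 : (Matrix.toLin' P - a • 1) y = (P - a • (1 : Matrix (Fin n) (Fin n) ℂ)).mulVec y := by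
      rw [Matrix.sub_mulVec, Matrix.smul_mulVec, Matrix.one_mulVec]
      simp [Matrix.toLin'_apply]
    rw [h1, ih]

lemma killGen (M : Matrix (Fin n) (Fin n) ℂ) (μ : ℂ) (x : Fin n → ℂ)
    (hx : x ∈ Module.End.maxGenEigenspace (Matrix.toLin' M) μ) :
    ((NormedSpace.exp M - Complex.exp μ • 1) ^ n).mulVec x = 0 := by
  rw [Module.End.maxGenEigenspace_eq_genEigenspace_finrank, Module.finrank_fin_fun,
    Module.End.genEigenspace_nat, LinearMap.mem_ker, pow_sub_smul_apply] at hx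
  set N : Matrix (Fin n) (Fin n) ℂ := M - μ • 1 with hN
  have hco : Commute (μ • (1 : Matrix (Fin n) (Fin n) ℂ)) N := (Commute.one_left N).smul_left μ
  have hexp : NormedSpace.exp M = Complex.exp μ • NormedSpace.exp N := by
    have hMsum : M = μ • 1 + N := by rw [hN]; abel
    rw [hMsum, Matrix.exp_add_of_commute _ _ hco]
    have h1 : (μ • (1 : Matrix (Fin n) (Fin n) ℂ)) = algebraMap ℂ _ μ :=
      (Algebra.algebraMap_eq_smul_one μ).symm
    have hm := (NormedSpace.map_exp (algebraMap ℂ (Matrix (Fin n) (Fin n) ℂ))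
      (continuous_algebraMap _ _) μ).symm
    rw [← Complex.exp_eq_exp_ℂ] at hm
    rw [h1]
    erw [hm]
    rw [Algebra.algebraMap_eq_smul_one, smul_mul_assoc, one_mul]
  rw [hexp]
  have h2 : Complex.exp μ • NormedSpace.exp N - Complex.exp μ • 1
      = Complex.exp μ • (NormedSpace.exp N - 1) := (smul_sub _ _ _).symm
  rw [h2, _root_.smul_pow, Matrix.smul_mulVec, kill N n x hx, smul_zero]

lemma exists_exp_eigenvalue (M : Matrix (Fin n) (Fin n) ℂ) (hn : n ≠ 0) (ν : ℂ) (v : Fin n → ℂ)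
    (hv : v ≠ 0) (hEv : (NormedSpace.exp M).mulVec v = ν • v) :
    ∃ μ : ℂ, Module.End.HasEigenvalue (Matrix.toLin' M) μ ∧
      μ ∈ (minpoly ℂ (Matrix.toLin' M)).roots.toFinset ∧ ν = Complex.exp μ := by
  set f := Matrix.toLin' M with hf
  have hint : IsIntegral ℂ f := Algebra.IsIntegral.isIntegral f
  have hp0 : minpoly ℂ f ≠ 0 := minpoly.ne_zero hint
  set s := (minpoly ℂ f).roots.toFinset with hs
  set q : Polynomial ℂ := ∏ μ ∈ s, (Polynomial.X - Polynomial.C (Complex.exp μ)) ^ n with hq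
  set E := Matrix.toLin' (NormedSpace.exp M) with hE
  have hker : ∀ μ : ℂ, Module.End.maxGenEigenspace f μ ≤ LinearMap.ker (Polynomial.aeval E q) := by
    intro μ x hx
    by_cases hx0 : x = 0
    · simp [hx0]
    have heig : Module.End.HasEigenvalue f μ := by
      refine Module.End.hasEigenvalue_of_hasGenEigenvalue
        (k := Module.finrank ℂ (Fin n → ℂ)) ?_
      rw [Module.End.maxGenEigenspace_eq_genEigenspace_finrank] at hx
      exact (Submodule.ne_bot_iff _).mpr ⟨x, hx, hx0⟩
    have hroot : μ ∈ s := Multiset.mem_toFinset.mpr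
      ((Polynomial.mem_roots hp0).mpr (Module.End.hasEigenvalue_iff_isRoot.mp heig))
    have hfac : (∏ μ' ∈ s.erase μ, (Polynomial.X - Polynomial.C (Complex.exp μ')) ^ n) *
        (Polynomial.X - Polynomial.C (Complex.exp μ)) ^ n = q :=
      Finset.prod_erase_mul s _ hroot
    rw [LinearMap.mem_ker, ← hfac, _root_.map_mul, Module.End.mul_apply]
    have h1 : (Polynomial.aeval E ((Polynomial.X - Polynomial.C (Complex.exp μ)) ^ n)) x
        = ((NormedSpace.exp M - Complex.exp μ • 1) ^ n).mulVec x := by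
      rw [map_pow, map_sub, Polynomial.aeval_X, Polynomial.aeval_C,
        Module.algebraMap_end_eq_smul_id]
      exact pow_sub_smul_apply _ _ _ _
    rw [h1, killGen M μ x hx, map_zero]
  have htop : (Polynomial.aeval E q) v = 0 := by
    have h2 : (⊤ : Submodule ℂ (Fin n → ℂ)) ≤ LinearMap.ker (Polynomial.aeval E q) := by
      rw [← Module.End.iSup_maxGenEigenspace_eq_top f]
      exact iSup_le hker
    exact LinearMap.mem_ker.mp (h2 Submodule.mem_top)
  have heigvec : Module.End.HasEigenvector E ν v :=
    ⟨Module.End.mem_eigenspace_iff.mpr (by rw [hE, Matrix.toLin'_apply]; exact hEv), hv⟩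
  have hqv : Polynomial.eval ν q • v = 0 := by
    rw [← Module.End.aeval_apply_of_hasEigenvector heigvec, htop]
  have hq0 : Polynomial.eval ν q = 0 := by
    rcases smul_eq_zero.mp hqv with h | h
    · exact h
    · exact absurd h hv
  rw [hq, Polynomial.eval_prod] at hq0
  obtain ⟨μ, hμs, hμ0⟩ := Finset.prod_eq_zero_iff.mp hq0
  have hsub : ν - Complex.exp μ = 0 := by
    have h := hμ0
    rw [Polynomial.eval_pow, Polynomial.eval_sub, Polynomial.eval_X, Polynomial.eval_C] at h
    exact pow_eq_zero_iff hn |>.mp h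
  refine ⟨μ, Module.End.hasEigenvalue_iff_isRoot.mpr
    ((Polynomial.mem_roots hp0).mp (Multiset.mem_toFinset.mp hμs)), hμs, sub_eq_zero.mp hsub⟩

end Stmt6Aux

namespace Stmt6Aux

variable {n : ℕ}

lemma entry_norm_le (M : Matrix (Fin n) (Fin n) ℂ) (i j : Fin n) : ‖M i j‖ ≤ ‖M‖ := by
  have h1 : ‖M i j‖₊ ≤ ‖M‖₊ := by
    rw [Matrix.linfty_opNNNorm_def]
    exact le_trans (Finset.single_le_sum (f := fun j' => ‖M i j'‖₊)
      (fun _ _ => zero_le) (Finset.mem_univ j))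
      (Finset.le_sup (f := fun i => ∑ j' : Fin n, ‖M i j'‖₊) (Finset.mem_univ i))
  exact_mod_cast h1

lemma hurwitz_isUnit_det {A : Matrix (Fin n) (Fin n) ℝ} (hA : Hurwitz A) : IsUnit A.det := by
  by_contra hdet
  have h0 : A.det = 0 := by simpa [isUnit_iff_ne_zero, not_not] using hdet
  have hdc : (A.map (Complex.ofReal)).det = 0 := by
    have := RingHom.map_det Complex.ofRealHom A
    rw [show Complex.ofRealHom.mapMatrix A = A.map Complex.ofReal from rfl] at this
    rw [← this, h0, map_zero]
  obtain ⟨v, hv0, hv⟩ := (Matrix.exists_mulVec_eq_zero_iff).mpr hdc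
  have : Module.End.HasEigenvalue (Matrix.toLin' (A.map (Complex.ofReal))) 0 :=
    Module.End.hasEigenvalue_of_hasEigenvector
      ⟨Module.End.mem_eigenspace_iff.mpr (by rw [Matrix.toLin'_apply, hv, zero_smul]), hv0⟩
  simpa using hA 0 this

lemma exp_pow_tendsto_zero {A : Matrix (Fin n) (Fin n) ℝ} (hA : Hurwitz A) :
    Tendsto (fun k : ℕ => mexp A ^ k) atTop (𝓝 0) := by
  rcases Nat.eq_zero_or_pos n with hn | hn
  · subst hn
    have h : (fun k : ℕ => mexp A ^ k) = fun _ => 0 := funext fun k => by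
      ext i j; exact i.elim0
    rw [h]; exact tendsto_const_nhds
  have hn' : n ≠ 0 := by omega
  set Aℂ := A.map (Complex.ofReal) with hAC
  set E := NormedSpace.exp Aℂ with hEdef
  have hmap : (mexp A).map Complex.ofReal = E := by
    have hcont : Continuous (Complex.ofRealHom.mapMatrix :
        Matrix (Fin n) (Fin n) ℝ → Matrix (Fin n) (Fin n) ℂ) := by
      show Continuous fun M : Matrix (Fin n) (Fin n) ℝ => M.map Complex.ofRealHom
      exact continuous_id.matrix_map Complex.continuous_ofReal
    have h1 := NormedSpace.map_exp (Complex.ofRealHom.mapMatrix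
      (m := Fin n)) hcont A
    change (NormedSpace.exp A).map Complex.ofReal = NormedSpace.exp Aℂ at h1
    exact h1
  have hBk : ∀ k : ℕ, (mexp A ^ k).map Complex.ofReal = E ^ k := by
    intro k
    rw [← hmap]
    have := map_pow (Complex.ofRealHom.mapMatrix (m := Fin n)) (mexp A) k
    rw [show Complex.ofRealHom.mapMatrix (mexp A ^ k) = (mexp A ^ k).map Complex.ofReal from rfl,
      show Complex.ofRealHom.mapMatrix (mexp A) = (mexp A).map Complex.ofReal from rfl] at this
    exact this
  set f := Matrix.toLin' Aℂ with hfdef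
  have hint : IsIntegral ℂ f := Algebra.IsIntegral.isIntegral f
  have hp0 : minpoly ℂ f ≠ 0 := minpoly.ne_zero hint
  set s := (minpoly ℂ f).roots.toFinset with hsdef
  set r : NNReal := s.sup fun μ => ‖Complex.exp μ‖₊ with hrdef
  have hr1 : r < 1 := by
    rw [hrdef, Finset.sup_lt_iff (by norm_num : (⊥ : NNReal) < 1)]
    intro μ hμ
    have heig : Module.End.HasEigenvalue f μ := Module.End.hasEigenvalue_iff_isRoot.mpr
      ((Polynomial.mem_roots hp0).mp (Multiset.mem_toFinset.mp hμ))
    have hre : μ.re < 0 := hA μ heig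
    have h2 : ‖Complex.exp μ‖ < 1 := by
      rw [Complex.norm_exp]
      exact Real.exp_lt_one_iff.mpr hre
    exact_mod_cast h2
  have hrad : spectralRadius ℂ E ≤ (r : ENNReal) := by
    refine iSup₂_le fun ν hν => ?_
    have hdet : ((algebraMap ℂ (Matrix (Fin n) (Fin n) ℂ)) ν - E).det = 0 := by
      by_contra hd
      exact (spectrum.mem_iff.mp hν)
        ((Matrix.isUnit_iff_isUnit_det _).mpr (isUnit_iff_ne_zero.mpr hd))
    obtain ⟨v, hv0, hv⟩ := (Matrix.exists_mulVec_eq_zero_iff).mpr hdet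
    have hEv : E.mulVec v = ν • v := by
      rw [Matrix.sub_mulVec] at hv
      have h3 : ((algebraMap ℂ (Matrix (Fin n) (Fin n) ℂ)) ν).mulVec v = ν • v := by
        rw [Algebra.algebraMap_eq_smul_one, Matrix.smul_mulVec, Matrix.one_mulVec]
      rw [h3] at hv
      exact (sub_eq_zero.mp hv).symm
    obtain ⟨μ, _, hμs, hνμ⟩ := exists_exp_eigenvalue Aℂ hn' ν v hv0 hEv
    rw [hνμ]
    exact_mod_cast ENNReal.coe_le_coe.mpr (Finset.le_sup (f := fun μ => ‖Complex.exp μ‖₊) hμs)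
  have hrad1 : spectralRadius ℂ E < 1 := lt_of_le_of_lt hrad (by exact_mod_cast hr1)
  obtain ⟨C, hC1, hC2⟩ := exists_between hrad1
  have hCtop : C ≠ ⊤ := hC2.trans_le le_top |>.ne
  have hG := spectrum.pow_nnnorm_pow_one_div_tendsto_nhds_spectralRadius E
  have hev : ∀ᶠ k : ℕ in atTop, (‖E ^ k‖₊ : ENNReal) ^ (1 / (k : ℝ)) < C :=
    hG.eventually_lt_const hC1
  have hbound : ∀ᶠ k : ℕ in atTop, ‖E ^ k‖ ≤ (C.toNNReal : ℝ) ^ k := by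
    filter_upwards [hev, eventually_ge_atTop 1] with k hk hk1
    have hk0 : (k : ℝ) ≠ 0 := Nat.cast_ne_zero.mpr (by omega)
    have h4 : (‖E ^ k‖₊ : ENNReal) = ((‖E ^ k‖₊ : ENNReal) ^ (1 / (k : ℝ))) ^ (k : ℝ) := by
      rw [← ENNReal.rpow_mul, one_div, inv_mul_cancel₀ hk0, ENNReal.rpow_one]
    have h5 : (‖E ^ k‖₊ : ENNReal) ≤ C ^ (k : ℝ) := by
      rw [h4]
      exact ENNReal.rpow_le_rpow hk.le (by positivity)
    have h6 : (‖E ^ k‖₊ : ENNReal) ≤ ((C.toNNReal : ENNReal)) ^ (k : ℕ) := by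
      rw [ENNReal.coe_toNNReal hCtop, ← ENNReal.rpow_natCast]
      exact h5
    have h7 : ‖E ^ k‖₊ ≤ C.toNNReal ^ k := by
      rw [← ENNReal.coe_pow] at h6
      exact_mod_cast h6
    calc ‖E ^ k‖ = ((‖E ^ k‖₊ : NNReal) : ℝ) := (coe_nnnorm _).symm
      _ ≤ ((C.toNNReal ^ k : NNReal) : ℝ) := by exact_mod_cast h7
      _ = (C.toNNReal : ℝ) ^ k := by push_cast; ring
  have hCR : (C.toNNReal : ℝ) < 1 := by
    have h8 : (C.toNNReal : ENNReal) < 1 := by rw [ENNReal.coe_toNNReal hCtop]; exact hC2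
    have h9 : C.toNNReal < 1 := by exact_mod_cast h8
    exact_mod_cast h9
  have hpow : Tendsto (fun k : ℕ => (C.toNNReal : ℝ) ^ k) atTop (𝓝 0) :=
    tendsto_pow_atTop_nhds_zero_of_lt_one (by positivity) hCR
  have hnorm : Tendsto (fun k : ℕ => ‖E ^ k‖) atTop (𝓝 0) :=
    squeeze_zero' (Eventually.of_forall fun k => norm_nonneg _) hbound hpow
  have hentry : ∀ i j : Fin n, Tendsto (fun k : ℕ => (mexp A ^ k) i j) atTop (𝓝 0) := by
    intro i j
    have hb : ∀ k : ℕ, |(mexp A ^ k) i j| ≤ ‖E ^ k‖ := by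
      intro k
      have h8 : ((mexp A ^ k) i j : ℂ) = (E ^ k) i j := by
        rw [← hBk k]; simp [Matrix.map_apply]
      calc |(mexp A ^ k) i j| = ‖((mexp A ^ k) i j : ℂ)‖ := by
            rw [Complex.norm_real, Real.norm_eq_abs]
        _ = ‖(E ^ k) i j‖ := by rw [h8]
        _ ≤ ‖E ^ k‖ := entry_norm_le _ i j
    exact squeeze_zero_norm hb hnorm
  have : Tendsto (fun k : ℕ => (mexp A ^ k : Fin n → Fin n → ℝ)) atTop (𝓝 0) := by
    apply tendsto_pi_nhds.mpr
    intro i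
    apply tendsto_pi_nhds.mpr
    intro j
    exact hentry i j
  exact this

end Stmt6Aux

namespace Stmt6Aux

variable {n : ℕ}

noncomputable def psiCLM (A : Matrix (Fin n) (Fin n) ℝ) (b c : Fin n → ℝ) :
    Matrix (Fin n) (Fin n) ℝ →L[ℝ] ℝ :=
  LinearMap.toContinuousLinearMap
    { toFun := fun M => c ⬝ᵥ (A⁻¹ * M).mulVec b
      map_add' := fun M N => by simp [mul_add, Matrix.add_mulVec, dotProduct_add]
      map_smul' := fun a M => by
        simp [mul_smul_comm, Matrix.smul_mulVec, dotProduct_smul] }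

@[simp] lemma psiCLM_apply (A : Matrix (Fin n) (Fin n) ℝ) (b c : Fin n → ℝ)
    (M : Matrix (Fin n) (Fin n) ℝ) : psiCLM A b c M = c ⬝ᵥ (A⁻¹ * M).mulVec b := rfl

noncomputable def phiCLM (b c : Fin n → ℝ) : Matrix (Fin n) (Fin n) ℝ →L[ℝ] ℝ :=
  LinearMap.toContinuousLinearMap
    { toFun := fun M => c ⬝ᵥ M.mulVec b
      map_add' := fun M N => by simp [Matrix.add_mulVec, dotProduct_add]
      map_smul' := fun a M => by simp [Matrix.smul_mulVec, dotProduct_smul] }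

@[simp] lemma phiCLM_apply (b c : Fin n → ℝ)
    (M : Matrix (Fin n) (Fin n) ℝ) : phiCLM b c M = c ⬝ᵥ M.mulVec b := rfl

lemma hasDerivAt_psi (A : Matrix (Fin n) (Fin n) ℝ) (b c : Fin n → ℝ)
    (hdet : IsUnit A.det) (t : ℝ) :
    HasDerivAt (fun τ : ℝ => psiCLM A b c (NormedSpace.exp (τ • A)))
      (c ⬝ᵥ (NormedSpace.exp (t • A)).mulVec b) t := by
  have hexp : HasDerivAt (fun τ : ℝ => NormedSpace.exp (τ • A))
      (NormedSpace.exp (t • A) * A) t := hasDerivAt_exp_smul_const A t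
  have h1 := (psiCLM A b c).hasFDerivAt.comp_hasDerivAt t hexp
  have hcomm : Commute A (NormedSpace.exp (t • A)) :=
    (((Commute.refl A).smul_right t).exp_right)
  have h2 : A⁻¹ * (NormedSpace.exp (t • A) * A) = NormedSpace.exp (t • A) := by
    rw [← hcomm.eq, ← mul_assoc, Matrix.nonsing_inv_mul A hdet, one_mul]
  have h3 : psiCLM A b c (NormedSpace.exp (t • A) * A)
      = c ⬝ᵥ (NormedSpace.exp (t • A)).mulVec b := by rw [psiCLM_apply, h2]
  rw [← h3]
  exact h1

lemma cont_h (A : Matrix (Fin n) (Fin n) ℝ) (b c : Fin n → ℝ) :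
    Continuous fun t : ℝ => c ⬝ᵥ (mexp (t • A)).mulVec b := by
  have : Continuous fun t : ℝ => phiCLM b c (NormedSpace.exp (t • A)) :=
    (phiCLM b c).continuous.comp
      (NormedSpace.exp_continuous.comp (continuous_id.smul continuous_const))
  exact this

end Stmt6Aux


open Stmt6Aux in
/-- Remark 3.2: for an asymptotically stable SISO monotone linear system with nonnegative
impulse response `h(t) = cᵀ e^{At} b`, the `L^∞`-to-`L^∞` induced gain of the zero-state
response `y(t) = ∫₀ᵗ h(t-s) u(s) ds` equals the steady-state gain `-cᵀ A⁻¹ b`. -/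
theorem stmt6 {n : ℕ} (A : Matrix (Fin n) (Fin n) ℝ) (b c : Fin n → ℝ)
    (hA : Hurwitz A)
    (hpos : ∀ t : ℝ, 0 ≤ t → 0 ≤ c ⬝ᵥ (mexp (t • A)).mulVec b) :
    (∀ u : ℝ → ℝ, Measurable u → ∀ M : ℝ, (∀ s : ℝ, 0 ≤ s → |u s| ≤ M) →
      ∀ t : ℝ, 0 ≤ t →
        |∫ s in (0:ℝ)..t, (c ⬝ᵥ (mexp ((t - s) • A)).mulVec b) * u s| ≤
          (-(c ⬝ᵥ A⁻¹.mulVec b)) * M) ∧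
    sSup {r : ℝ | ∃ u : ℝ → ℝ, Measurable u ∧ (∀ s : ℝ, |u s| ≤ 1) ∧
        ∃ t : ℝ, 0 ≤ t ∧ r = |∫ s in (0:ℝ)..t, (c ⬝ᵥ (mexp ((t - s) • A)).mulVec b) * u s|} =
      -(c ⬝ᵥ A⁻¹.mulVec b) := by
  have hdet : IsUnit A.det := hurwitz_isUnit_det hA
  set h : ℝ → ℝ := fun τ => c ⬝ᵥ (mexp (τ • A)).mulVec b with hh
  set g : ℝ → ℝ := fun τ => psiCLM A b c (NormedSpace.exp (τ • A)) with hgdef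
  have hg : ∀ t : ℝ, HasDerivAt g (h t) t := fun t => hasDerivAt_psi A b c hdet t
  have hcont : Continuous h := cont_h A b c
  have hgcont : Continuous g := (psiCLM A b c).continuous.comp
    (NormedSpace.exp_continuous.comp (continuous_id.smul continuous_const))
  have hg0 : g 0 = c ⬝ᵥ A⁻¹.mulVec b := by
    show psiCLM A b c (NormedSpace.exp ((0:ℝ) • A)) = _
    rw [zero_smul, NormedSpace.exp_zero, psiCLM_apply, mul_one]
  have hFTC : ∀ t : ℝ, (∫ s in (0:ℝ)..t, h s) = g t - g 0 := fun t =>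
    intervalIntegral.integral_eq_sub_of_hasDerivAt (fun s _ => hg s)
      (hcont.intervalIntegrable 0 t)
  have hgk : Tendsto (fun k : ℕ => g (k : ℝ)) atTop (𝓝 0) := by
    have h1 : ∀ k : ℕ, g (k : ℝ) = psiCLM A b c (mexp A ^ k) := by
      intro k
      show psiCLM A b c (NormedSpace.exp ((k : ℝ) • A)) = psiCLM A b c (mexp A ^ k)
      rw [Nat.cast_smul_eq_nsmul ℝ k A, Matrix.exp_nsmul k A]
      rfl
    have h2 : Tendsto (fun k : ℕ => psiCLM A b c (mexp A ^ k)) atTop (𝓝 (psiCLM A b c 0)) :=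
      ((psiCLM A b c).continuous.tendsto 0).comp (exp_pow_tendsto_zero hA)
    have h3 : psiCLM A b c 0 = 0 := by simp
    rw [h3] at h2
    exact h2.congr fun k => (h1 k).symm
  have hmono : MonotoneOn g (Ici 0) := by
    refine monotoneOn_of_deriv_nonneg (convex_Ici 0) hgcont.continuousOn
      (fun x _ => ((hg x).differentiableAt).differentiableWithinAt) ?_
    intro x hx
    rw [(hg x).deriv]
    rw [interior_Ici] at hx
    exact hpos x (le_of_lt hx)
  have hgle : ∀ t : ℝ, 0 ≤ t → g t ≤ 0 := by
    intro t ht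
    refine ge_of_tendsto hgk ?_
    filter_upwards [eventually_ge_atTop ⌈t⌉₊] with k hk
    exact hmono (mem_Ici.mpr ht) (mem_Ici.mpr (Nat.cast_nonneg k))
      ((Nat.le_ceil t).trans (Nat.cast_le.mpr hk))
  have hsub : ∀ t : ℝ, 0 ≤ t → (∫ s in (0:ℝ)..t, h (t - s)) = g t - g 0 := by
    intro t ht
    rw [intervalIntegral.integral_comp_sub_left h t, sub_self, sub_zero, hFTC t]
  -- part (i)
  have part1 : ∀ u : ℝ → ℝ, Measurable u → ∀ M : ℝ, (∀ s : ℝ, 0 ≤ s → |u s| ≤ M) →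
      ∀ t : ℝ, 0 ≤ t →
        |∫ s in (0:ℝ)..t, h (t - s) * u s| ≤ (-(c ⬝ᵥ A⁻¹.mulVec b)) * M := by
    intro u hu M hM t ht
    have hM0 : 0 ≤ M := le_trans (abs_nonneg _) (hM 0 le_rfl)
    have hcont2 : Continuous fun s : ℝ => h (t - s) :=
      hcont.comp (continuous_const.sub continuous_id)
    obtain ⟨Ch, hCh⟩ := (isCompact_uIcc (a := (0:ℝ)) (b := t)).exists_bound_of_continuousOn
      hcont2.continuousOn
    have hCh0 : 0 ≤ Ch := le_trans (norm_nonneg _) (hCh 0 left_mem_uIcc)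
    have huInt : IntervalIntegrable (fun s => h (t - s) * u s) volume 0 t := by
      rw [intervalIntegrable_iff]
      have hmu : volume (Set.uIoc (0:ℝ) t) < ⊤ := by
        rw [Set.uIoc_of_le ht]; exact measure_Ioc_lt_top
      refine Integrable.mono' (g := fun _ => Ch * M)
        (integrableOn_const (C := Ch * M) hmu.ne) ?_ ?_
      · exact ((hcont2.measurable.mul hu).aestronglyMeasurable)
      · filter_upwards [ae_restrict_mem measurableSet_uIoc] with s hs
        have hs' : s ∈ Set.Ioc 0 t := by rwa [Set.uIoc_of_le ht] at hs
        have h1 : ‖h (t - s)‖ ≤ Ch := hCh s (Set.uIoc_subset_uIcc hs)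
        calc ‖h (t - s) * u s‖ = ‖h (t - s)‖ * ‖u s‖ := norm_mul _ _
          _ ≤ Ch * M := mul_le_mul h1 (by rw [Real.norm_eq_abs]; exact hM s (le_of_lt hs'.1))
              (norm_nonneg _) hCh0
    have hInt2 : IntervalIntegrable (fun s => h (t - s) * M) volume 0 t :=
      (hcont2.mul continuous_const).intervalIntegrable 0 t
    have hbd : ∀ s ∈ Set.Icc (0:ℝ) t, |h (t - s) * u s| ≤ h (t - s) * M := by
      intro s hs
      have hts : (0:ℝ) ≤ t - s := by linarith [hs.2]
      have hpos' : 0 ≤ h (t - s) := hpos (t - s) hts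
      rw [abs_mul, abs_of_nonneg hpos']
      exact mul_le_mul_of_nonneg_left (hM s hs.1) hpos'
    calc |∫ s in (0:ℝ)..t, h (t - s) * u s|
        ≤ ∫ s in (0:ℝ)..t, |h (t - s) * u s| :=
          intervalIntegral.abs_integral_le_integral_abs ht
      _ ≤ ∫ s in (0:ℝ)..t, h (t - s) * M :=
          intervalIntegral.integral_mono_on ht huInt.abs hInt2 hbd
      _ = (∫ s in (0:ℝ)..t, h (t - s)) * M := intervalIntegral.integral_mul_const M _
      _ = (g t - g 0) * M := by rw [hsub t ht]
      _ ≤ (-(g 0)) * M := by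
          apply mul_le_mul_of_nonneg_right _ hM0
          have := hgle t ht
          linarith
      _ = (-(c ⬝ᵥ A⁻¹.mulVec b)) * M := by rw [hg0]
  refine ⟨part1, ?_⟩
  set S := {r : ℝ | ∃ u : ℝ → ℝ, Measurable u ∧ (∀ s : ℝ, |u s| ≤ 1) ∧
    ∃ t : ℝ, 0 ≤ t ∧ r = |∫ s in (0:ℝ)..t, h (t - s) * u s|} with hSdef
  have hub : ∀ r ∈ S, r ≤ -(c ⬝ᵥ A⁻¹.mulVec b) := by
    rintro r ⟨u, hu, hu1, t, ht, rfl⟩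
    have := part1 u hu 1 (fun s _ => hu1 s) t ht
    rwa [mul_one] at this
  have hne : S.Nonempty := by
    refine ⟨0, fun _ => 0, measurable_const, by simp, 0, le_rfl, ?_⟩
    simp
  have hbdd : BddAbove S := ⟨-(c ⬝ᵥ A⁻¹.mulVec b), fun r hr => hub r hr⟩
  refine le_antisymm (csSup_le hne hub) ?_
  have hmem : ∀ k : ℕ, g (k : ℝ) - g 0 ∈ S := by
    intro k
    refine ⟨fun _ => 1, measurable_const, by simp, (k : ℝ), Nat.cast_nonneg k, ?_⟩
    have h1 : (∫ s in (0:ℝ)..(k:ℝ), h ((k:ℝ) - s) * 1) = g (k:ℝ) - g 0 := by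
      simp only [mul_one]
      exact hsub (k : ℝ) (Nat.cast_nonneg k)
    rw [h1]
    have h2 : 0 ≤ g (k:ℝ) - g 0 := by
      rw [← hsub (k:ℝ) (Nat.cast_nonneg k)]
      refine intervalIntegral.integral_nonneg (Nat.cast_nonneg k) ?_
      intro s hs
      exact hpos ((k:ℝ) - s) (by linarith [hs.2])
    exact (abs_of_nonneg h2).symm
  have hlim : Tendsto (fun k : ℕ => g (k : ℝ) - g 0) atTop (𝓝 (-(g 0))) := by
    have := hgk.sub (tendsto_const_nhds : Tendsto (fun _ : ℕ => g 0) atTop (𝓝 (g 0)))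
    rwa [zero_sub] at this
  have hle : ∀ k : ℕ, g (k : ℝ) - g 0 ≤ sSup S := fun k => le_csSup hbdd (hmem k)
  have : -(g 0) ≤ sSup S := le_of_tendsto hlim (Eventually.of_forall hle)
  rwa [hg0] at this
end

section
/- Let f : ℝⁿ × ℝᵐ → ℝⁿ be a C¹ vector field, let K ⊆ ℝⁿ and K^U ⊆ ℝᵐ be closed convex cones, and suppose f(x̄, ū) = 0 for some x̄ ∈ ℝⁿ, ū ∈ ℝᵐ. Assume the differential characterization of monotonicity: for all x₁, x₂ ∈ ℝⁿ and u₁, u₂ ∈ ℝᵐ with x₁ − x₂ ∈ K and u₁ − u₂ ∈ K^U, one has f(x₁, u₁) − f(x₂, u₂) ∈ TC_{x₁−x₂}(K). Then the linearization at (x̄, ū) satisfies the same condition: for all z ∈ K and v ∈ K^U, D_x f(x̄, ū) z + D_u f(x̄, ū) v ∈ closure(TC_z(K)). (Lemma 3.3: the linearization of a monotone system at an equilibrium is monotone.) -/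
open Matrix MeasureTheory Set
open Filter

/-- Tangent cone to a cone at `t • z` for `t > 0` is contained in the tangent cone at `z`. -/
lemma tangentCone_smul_subset {d : ℕ} {K : Set (Fin d → ℝ)}
    (hK : ∀ c : ℝ, 0 ≤ c → ∀ x ∈ K, c • x ∈ K) {t : ℝ} (ht : 0 < t) (z : Fin d → ℝ) :
    tangentConeAt ℝ K (t • z) ⊆ tangentConeAt ℝ K z := by
  intro y hy
  rw [mem_tangentConeAt_iff_exists_seq_norm_tendsto_atTop] at hy ⊢
  obtain ⟨c, d, hc, hd, hlim⟩ := hy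
  refine ⟨fun n => t * c n, fun n => t⁻¹ • d n, ?_, ?_, ?_⟩
  swap
  · refine hd.mono fun n hn => ?_
    have := hK t⁻¹ (le_of_lt (inv_pos.2 ht)) _ hn
    rwa [smul_add, smul_smul, inv_mul_cancel₀ ht.ne', one_smul] at this
  · have : (fun n => ‖t * c n‖) = fun n => |t| * ‖c n‖ := by
      funext n; rw [norm_mul, Real.norm_eq_abs]
    rw [this]
    exact hc.const_mul_atTop (abs_pos.2 ht.ne')
  · have : (fun n => (t * c n) • (t⁻¹ • d n)) = fun n => c n • d n := by
      funext n
      rw [smul_smul]; congr 1; field_simp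
    rw [this]; exact hlim

/-- The tangent cone is closed under positive scalar multiplication. -/
lemma smul_mem_tangentCone {d : ℕ} {K : Set (Fin d → ℝ)} {z y : Fin d → ℝ} {t : ℝ}
    (ht : 0 < t) (hy : y ∈ tangentConeAt ℝ K z) : t • y ∈ tangentConeAt ℝ K z := by
  rw [mem_tangentConeAt_iff_exists_seq_norm_tendsto_atTop] at hy ⊢
  obtain ⟨c, d, hc, hd, hlim⟩ := hy
  refine ⟨fun n => t * c n, d, ?_, hd, ?_⟩
  · have : (fun n => ‖t * c n‖) = fun n => |t| * ‖c n‖ := by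
      funext n; rw [norm_mul, Real.norm_eq_abs]
    rw [this]
    exact hc.const_mul_atTop (abs_pos.2 ht.ne')
  · have : (fun n => (t * c n) • d n) = fun n => t • (c n • d n) := by
      funext n; rw [smul_smul]
    rw [this]
    exact hlim.const_smul t

/-- Lemma 3.3: the linearization of a monotone system at an equilibrium is monotone. -/
theorem stmt7 {n m : ℕ} (f : (Fin n → ℝ) × (Fin m → ℝ) → (Fin n → ℝ))
    (hf : ContDiff ℝ 1 f)
    (K : Set (Fin n → ℝ)) (KU : Set (Fin m → ℝ))
    (hK : IsClosedConvexCone K) (hKU : IsClosedConvexCone KU)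
    (xbar : Fin n → ℝ) (ubar : Fin m → ℝ) (heq : f (xbar, ubar) = 0)
    (hmono : ∀ x₁ x₂ : Fin n → ℝ, ∀ u₁ u₂ : Fin m → ℝ,
      x₁ - x₂ ∈ K → u₁ - u₂ ∈ KU →
        f (x₁, u₁) - f (x₂, u₂) ∈ tangentConeAt ℝ K (x₁ - x₂)) :
    ∀ z ∈ K, ∀ v ∈ KU,
      fderiv ℝ f (xbar, ubar) (z, 0) + fderiv ℝ f (xbar, ubar) (0, v) ∈
        closure (tangentConeAt ℝ K z) := by
  intro z hz v hv
  have hder : HasFDerivAt f (fderiv ℝ f (xbar, ubar)) (xbar, ubar) :=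
    ((hf.differentiable one_ne_zero) (xbar, ubar)).hasFDerivAt
  have hsum : fderiv ℝ f (xbar, ubar) (z, 0) + fderiv ℝ f (xbar, ubar) (0, v)
      = fderiv ℝ f (xbar, ubar) (z, v) := by
    rw [← map_add]
    congr 1
    simp [Prod.ext_iff]
  rw [hsum]
  have hc : Tendsto (fun k : ℕ => ‖(k : ℝ)‖) atTop atTop := by
    have : (fun k : ℕ => ‖(k : ℝ)‖) = fun k : ℕ => (k : ℝ) := by
      funext k; exact Real.norm_natCast k
    rw [this]
    exact tendsto_natCast_atTop_atTop
  have hlim := hder.lim (z, v) hc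
  refine mem_closure_of_tendsto hlim ?_
  filter_upwards [eventually_ge_atTop 1] with k hk
  have hkpos : (0 : ℝ) < (k : ℝ) := by exact_mod_cast hk
  have htpos : (0 : ℝ) < ((k : ℝ))⁻¹ := inv_pos.2 hkpos
  set t : ℝ := ((k : ℝ))⁻¹ with htdef
  have key : f ((xbar, ubar) + t • (z, v)) - f (xbar, ubar) ∈ tangentConeAt ℝ K z := by
    have h1 : (xbar + t • z) - xbar ∈ K := by
      simpa using hK.2.2 t htpos.le z hz
    have h2 : (ubar + t • v) - ubar ∈ KU := by
      simpa using hKU.2.2 t htpos.le v hv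
    have := hmono (xbar + t • z) xbar (ubar + t • v) ubar h1 h2
    have hrw : (xbar + t • z) - xbar = t • z := by abel
    rw [hrw] at this
    have hpair : (xbar, ubar) + t • (z, v) = (xbar + t • z, ubar + t • v) := by
      simp [Prod.ext_iff]
    rw [hpair]
    exact tangentCone_smul_subset hK.2.2 htpos z this
  exact smul_mem_tangentCone hkpos key
end

section
/- Let A be a Hurwitz real n×n matrix, b, c ∈ ℝⁿ, λ ∈ ℝ, and v ∈ ℝⁿ with (A + b cᵀ) v = λ v. Assume cᵀ e^{At} v ≥ 0 for all t ≥ 0 and cᵀ v ≠ 0. Then, writing k' := −cᵀ A⁻¹ b for the slope of the I/O static characteristic of the linearized system: λ < 0 if and only if k' < 1, and λ > 0 if and only if k' > 1. (Stability dichotomy for the dominant eigenvalue of the closed-loop linearization, established in the proof of Theorem 7: equilibria with k'_y(ū) < 1 are locally asymptotically stable, and equilibria with k'_y(ū) > 1 have a nontrivial unstable manifold.) -/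
open Matrix MeasureTheory Set

open Filter Topology

attribute [local instance] Matrix.linftyOpNormedAddCommGroup Matrix.linftyOpNormedRing
  Matrix.linftyOpNormedAlgebra

lemma hurwitz_isUnit_det {n : ℕ} {A : Matrix (Fin n) (Fin n) ℝ} (hA : Hurwitz A) :
    IsUnit A.det := by
  by_contra h
  have hdet : A.det = 0 := by
    simpa [isUnit_iff_ne_zero] using h
  have hdetC : (A.map (Complex.ofReal)).det = 0 := by
    have := (Complex.ofRealHom.map_det A).symm
    rw [hdet, map_zero] at this
    exact this
  obtain ⟨w, hw, hwz⟩ := (Matrix.exists_mulVec_eq_zero_iff).2 hdetC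
  have : IsEigenvalue A 0 := by
    apply Module.End.hasEigenvalue_of_hasEigenvector (x := w)
    refine ⟨?_, hw⟩
    rw [Module.End.mem_eigenspace_iff]
    simp [Matrix.toLin'_apply, hwz]
  have := hA 0 this
  simp at this

attribute [local instance] Matrix.linftyOpNormedAddCommGroup Matrix.linftyOpNormedRing
  Matrix.linftyOpNormedAlgebra

-- coercion test
example {n : ℕ} (B : Matrix (Fin n) (Fin n) ℂ) :
    (Matrix.toLinAlgEquiv' B : Module.End ℂ (Fin n → ℂ)) = Matrix.toLin' B := rfl

-- scalar coefficient tendsto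
lemma coef_tendsto {μ : ℂ} (hre : μ.re < 0) (j : ℕ) :
    Tendsto (fun t : ℝ => Complex.exp ((t : ℂ) * μ) * (t : ℂ) ^ j) atTop (𝓝 0) := by
  rw [tendsto_zero_iff_norm_tendsto_zero]
  have hr : (0:ℝ) < -μ.re := by linarith
  have h1 : Tendsto (fun t : ℝ => ((-μ.re) * t) ^ j * Real.exp (-((-μ.re) * t))) atTop (𝓝 0) :=
    (Real.tendsto_pow_mul_exp_neg_atTop_nhds_zero j).comp
      (Tendsto.const_mul_atTop hr tendsto_id)
  have h2 : Tendsto (fun t : ℝ => ((-μ.re) ^ j)⁻¹ * (((-μ.re) * t) ^ j * Real.exp (-((-μ.re) * t))))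
      atTop (𝓝 0) := by
    simpa using h1.const_mul ((-μ.re) ^ j)⁻¹
  refine h2.congr' ?_
  filter_upwards [eventually_ge_atTop (0:ℝ)] with t ht
  have : ((-μ.re) ^ j)⁻¹ * (((-μ.re) * t) ^ j * Real.exp (-((-μ.re) * t)))
      = t ^ j * Real.exp (t * μ.re) := by
    rw [mul_pow]
    field_simp
  rw [this, norm_mul, Complex.norm_exp, norm_pow,
    Complex.norm_real]
  simp [Real.norm_eq_abs, abs_of_nonneg ht]
  ring

lemma complex_decay {n : ℕ} {A : Matrix (Fin n) (Fin n) ℝ} (hA : Hurwitz A) (x : Fin n → ℂ) :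
    Tendsto (fun t : ℝ => (NormedSpace.exp ((t : ℂ) • (A.map Complex.ofReal))).mulVec x)
      atTop (𝓝 0) := by
  set B := A.map Complex.ofReal with hB
  set f : Module.End ℂ (Fin n → ℂ) := Matrix.toLinAlgEquiv' B with hf
  -- the set of good vectors is a submodule
  set S : Submodule ℂ (Fin n → ℂ) :=
    { carrier := {y | Tendsto (fun t : ℝ => (NormedSpace.exp ((t : ℂ) • B)).mulVec y)
        atTop (𝓝 0)}
      add_mem' := fun ha hb => by simpa [Matrix.mulVec_add] using Tendsto.add ha hb
      zero_mem' := by simpa [Matrix.mulVec_zero] using tendsto_const_nhds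
      smul_mem' := fun c a ha => by
        have h := Tendsto.const_smul (ha : Tendsto (fun t : ℝ =>
          (NormedSpace.exp ((t : ℂ) • B)).mulVec a) atTop (𝓝 0)) c
        rw [smul_zero] at h
        simpa only [Set.mem_setOf_eq, Matrix.mulVec_smul] using h } with hS
  suffices h : ∀ μ : ℂ, f.maxGenEigenspace μ ≤ S by
    have htop := Module.End.iSup_maxGenEigenspace_eq_top f
    have hx : x ∈ (⨆ μ : ℂ, f.maxGenEigenspace μ) := htop ▸ Submodule.mem_top
    exact (iSup_le h) hx
  intro μ y hy
  rcases eq_or_ne y 0 with rfl | hy0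
  · exact S.zero_mem
  obtain ⟨k, hk⟩ := (Module.End.mem_maxGenEigenspace f μ y).1 hy
  -- μ is an eigenvalue, so Re μ < 0
  have hk0 : k ≠ 0 := by rintro rfl; simp at hk; exact hy0 hk
  have hev : Module.End.HasEigenvalue f μ := by
    apply Module.End.hasEigenvalue_of_hasGenEigenvalue (k := k)
    rw [Module.End.HasGenEigenvalue, Module.End.HasUnifEigenvalue, Submodule.ne_bot_iff]
    exact ⟨y, Module.End.mem_genEigenspace_nat.2 (by simpa using hk), hy0⟩
  have hre : μ.re < 0 := hA μ hev
  -- nilpotent part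
  set N : Matrix (Fin n) (Fin n) ℂ := B - μ • 1 with hN
  have hNy : ∀ j, k ≤ j → (N ^ j).mulVec y = 0 := by
    have hNk : (N ^ k).mulVec y = 0 := by
      have heq : (f - μ • 1) ^ k = Matrix.toLinAlgEquiv' (N ^ k) := by
        rw [map_pow]
        congr 1
        rw [hN, hf, map_sub]
        rw [_root_.map_smul,
          show (Matrix.toLinAlgEquiv' (1 : Matrix (Fin n) (Fin n) ℂ)) = 1 from _root_.map_one _]
      rw [heq] at hk
      simpa [← map_pow, Matrix.toLinAlgEquiv'_apply, Matrix.toLin'_apply] using hk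
    intro j hj
    rw [← Nat.sub_add_cancel hj, pow_add, ← Matrix.mulVec_mulVec, hNk, Matrix.mulVec_zero]
  -- expand the exponential
  have key : ∀ t : ℝ, (NormedSpace.exp ((t : ℂ) • B)).mulVec y
      = ∑ j ∈ Finset.range k,
          (Complex.exp ((t : ℂ) * μ) * ((t : ℂ) ^ j * ((j.factorial : ℂ))⁻¹)) •
            (N ^ j).mulVec y := by
    intro t
    have hsplit : (t : ℂ) • B = ((t : ℂ) * μ) • (1 : Matrix (Fin n) (Fin n) ℂ) + (t : ℂ) • N := by
      rw [hN]; rw [smul_sub]; module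
    have hcomm : Commute (((t : ℂ) * μ) • (1 : Matrix (Fin n) (Fin n) ℂ)) ((t : ℂ) • N) := by
      apply Commute.smul_left; apply Commute.smul_right; exact Commute.one_left _
    rw [hsplit, Matrix.exp_add_of_commute _ _ hcomm]
    have h1 : NormedSpace.exp (((t : ℂ) * μ) • (1 : Matrix (Fin n) (Fin n) ℂ))
        = Complex.exp ((t : ℂ) * μ) • (1 : Matrix (Fin n) (Fin n) ℂ) := by
      have := NormedSpace.map_exp (algebraMap ℂ (Matrix (Fin n) (Fin n) ℂ))
        (continuous_algebraMap _ _) ((t : ℂ) * μ)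
      rw [← Algebra.algebraMap_eq_smul_one, ← Algebra.algebraMap_eq_smul_one, Complex.exp_eq_exp_ℂ]
      exact this.symm
    rw [h1, smul_mul_assoc, one_mul, Matrix.smul_mulVec]
    -- now expand exp of the nilpotent part applied to y
    have h2 : (NormedSpace.exp ((t : ℂ) • N)).mulVec y
        = ∑ j ∈ Finset.range k, ((t : ℂ) ^ j * ((j.factorial : ℂ))⁻¹) • (N ^ j).mulVec y := by
      let L : Matrix (Fin n) (Fin n) ℂ →ₗ[ℂ] (Fin n → ℂ) :=
        { toFun := fun M => M.mulVec y
          map_add' := fun M₁ M₂ => Matrix.add_mulVec M₁ M₂ y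
          map_smul' := fun c M => Matrix.smul_mulVec c M y }
      let Lc : Matrix (Fin n) (Fin n) ℂ →L[ℂ] (Fin n → ℂ) := LinearMap.toContinuousLinearMap L
      have hsum : Summable fun j : ℕ => ((j.factorial : ℂ))⁻¹ • ((t : ℂ) • N) ^ j :=
        NormedSpace.expSeries_summable' ((t : ℂ) • N)
      have := Lc.map_tsum hsum
      rw [NormedSpace.exp_eq_tsum ℂ]
      have hLc : ∀ M : Matrix (Fin n) (Fin n) ℂ, Lc M = M.mulVec y := fun _ => rfl
      calc (∑' j : ℕ, ((j.factorial : ℂ))⁻¹ • ((t : ℂ) • N) ^ j).mulVec y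
          = ∑' j : ℕ, (((j.factorial : ℂ))⁻¹ • ((t : ℂ) • N) ^ j).mulVec y := by
            rw [← hLc, this]; simp [hLc]
        _ = ∑ j ∈ Finset.range k, (((j.factorial : ℂ))⁻¹ • ((t : ℂ) • N) ^ j).mulVec y := by
            apply tsum_eq_sum
            intro j hj
            rw [smul_pow, Matrix.smul_mulVec, Matrix.smul_mulVec,
              hNy j (by simpa using hj)]
            simp
        _ = ∑ j ∈ Finset.range k, ((t : ℂ) ^ j * ((j.factorial : ℂ))⁻¹) • (N ^ j).mulVec y := by
            apply Finset.sum_congr rfl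
            intro j _
            rw [smul_pow, Matrix.smul_mulVec, Matrix.smul_mulVec, smul_smul]
            ring_nf
    rw [h2, Finset.smul_sum]
    apply Finset.sum_congr rfl
    intro j _
    rw [smul_smul]
  -- conclude by tendsto of each summand
  have : Tendsto (fun t : ℝ => ∑ j ∈ Finset.range k,
      (Complex.exp ((t : ℂ) * μ) * ((t : ℂ) ^ j * ((j.factorial : ℂ))⁻¹)) •
        (N ^ j).mulVec y) atTop (𝓝 0) := by
    have : (0 : Fin n → ℂ) = ∑ j ∈ Finset.range k, (0 : Fin n → ℂ) := by simp
    rw [this]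
    apply tendsto_finset_sum
    intro j _
    have hc : Tendsto (fun t : ℝ =>
        Complex.exp ((t : ℂ) * μ) * ((t : ℂ) ^ j * ((j.factorial : ℂ))⁻¹)) atTop (𝓝 0) := by
      have := (coef_tendsto hre j).mul_const ((j.factorial : ℂ))⁻¹
      simpa [mul_assoc] using this
    simpa using hc.smul_const ((N ^ j).mulVec y)
  exact (this.congr (fun t => (key t).symm))

lemma hurwitz_decay {n : ℕ} {A : Matrix (Fin n) (Fin n) ℝ} (hA : Hurwitz A) (v : Fin n → ℝ) :
    Tendsto (fun t : ℝ => (mexp (t • A)).mulVec v) atTop (𝓝 0) := by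
  have hmap : ∀ t : ℝ, ∀ i, (((mexp (t • A)).mulVec v i : ℝ) : ℂ)
      = (NormedSpace.exp ((t : ℂ) • (A.map Complex.ofReal))).mulVec
          (fun i => ((v i : ℝ) : ℂ)) i := by
    intro t i
    have h1 : (mexp (t • A)).map Complex.ofReal
        = NormedSpace.exp ((t : ℂ) • (A.map Complex.ofReal)) := by
      rw [mexp]
      have h2 : ((NormedSpace.exp (t • A)).map Complex.ofReal : Matrix (Fin n) (Fin n) ℂ)
          = NormedSpace.exp ((t • A).map Complex.ofReal) := by
        have := NormedSpace.map_exp ((Complex.ofRealHom.mapMatrix :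
          Matrix (Fin n) (Fin n) ℝ →+* Matrix (Fin n) (Fin n) ℂ)) ?_ (t • A)
        · exact this
        · exact Continuous.matrix_map continuous_id Complex.continuous_ofReal
      rw [h2]
      have h3 : ((t • A).map Complex.ofReal : Matrix (Fin n) (Fin n) ℂ)
          = (t : ℂ) • (A.map Complex.ofReal) := by
        ext i j
        simp [Matrix.map_apply]
      rw [h3]
    rw [← h1]
    simp [Matrix.mulVec, dotProduct, Matrix.map_apply]
  have h := complex_decay hA (fun i => ((v i : ℝ) : ℂ))
  rw [tendsto_pi_nhds]
  intro i
  have hi := (tendsto_pi_nhds.1 h) i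
  have : Tendsto (fun t : ℝ => (((mexp (t • A)).mulVec v i : ℝ) : ℂ)) atTop (𝓝 0) := by
    refine hi.congr fun t => (hmap t i).symm
  have := (Complex.continuous_re.tendsto 0).comp this
  simpa [Function.comp_def] using this


/-- Stability dichotomy for the dominant eigenvalue of the closed-loop linearization
(proof of Theorem 7): with `k' = -cᵀ A⁻¹ b`, one has `λ < 0 ↔ k' < 1` and `λ > 0 ↔ k' > 1`. -/
theorem stmt11 {n : ℕ} (A : Matrix (Fin n) (Fin n) ℝ) (b c : Fin n → ℝ)
    (hA : Hurwitz A) (lam : ℝ) (v : Fin n → ℝ)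
    (hev : (A + Matrix.vecMulVec b c).mulVec v = lam • v)
    (hpos : ∀ t : ℝ, 0 ≤ t → 0 ≤ c ⬝ᵥ (mexp (t • A)).mulVec v)
    (hcv : c ⬝ᵥ v ≠ 0) :
    (lam < 0 ↔ -(c ⬝ᵥ A⁻¹.mulVec b) < 1) ∧
    (lam > 0 ↔ -(c ⬝ᵥ A⁻¹.mulVec b) > 1) := by
  classical
  have hexp0 : mexp ((0:ℝ) • A) = 1 := by
    simp [mexp, NormedSpace.exp_zero]
  have hcv0 : 0 < c ⬝ᵥ v := by
    have h0 := hpos 0 le_rfl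
    rw [hexp0, Matrix.one_mulVec] at h0
    exact lt_of_le_of_ne h0 (Ne.symm hcv)
  have hdet : IsUnit A.det := hurwitz_isUnit_det hA
  -- eigen relation
  have hAv : A.mulVec v = lam • v - (c ⬝ᵥ v) • b := by
    have h1 : (Matrix.vecMulVec b c).mulVec v = (c ⬝ᵥ v) • b := by
      ext i
      simp only [Matrix.mulVec, dotProduct, Matrix.vecMulVec_apply, Pi.smul_apply,
        smul_eq_mul]
      rw [Finset.sum_mul]
      congr 1; ext j; ring
    rw [Matrix.add_mulVec, h1] at hev
    rw [← hev]; abel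
  have hinv : ∀ w : Fin n → ℝ, A⁻¹.mulVec (A.mulVec w) = w := by
    intro w
    rw [Matrix.mulVec_mulVec, Matrix.nonsing_inv_mul A hdet, Matrix.one_mulVec]
  have hv' : v = lam • A⁻¹.mulVec v - (c ⬝ᵥ v) • A⁻¹.mulVec b := by
    have := congrArg (fun w => A⁻¹.mulVec w) hAv
    simpa [hinv v, Matrix.mulVec_sub, Matrix.mulVec_smul] using this
  set K : ℝ := c ⬝ᵥ A⁻¹.mulVec b with hK
  set Mv : ℝ := c ⬝ᵥ A⁻¹.mulVec v with hMv
  have hstar : c ⬝ᵥ v = lam * Mv - (c ⬝ᵥ v) * K := by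
    calc c ⬝ᵥ v = c ⬝ᵥ (lam • A⁻¹.mulVec v - (c ⬝ᵥ v) • A⁻¹.mulVec b) := by rw [← hv']
    _ = lam * Mv - (c ⬝ᵥ v) * K := by
        rw [dotProduct_sub, dotProduct_smul, dotProduct_smul]
        simp [smul_eq_mul]
        rfl
  -- the auxiliary function g and its derivative φ
  set φ : ℝ → ℝ := fun t => c ⬝ᵥ (mexp (t • A)).mulVec v with hφ
  set g : ℝ → ℝ := fun t => c ⬝ᵥ A⁻¹.mulVec ((mexp (t • A)).mulVec v) with hg
  let Lm : Matrix (Fin n) (Fin n) ℝ →ₗ[ℝ] ℝ :=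
    { toFun := fun M => c ⬝ᵥ A⁻¹.mulVec (M.mulVec v)
      map_add' := fun M₁ M₂ => by
        simp [Matrix.add_mulVec, Matrix.mulVec_add, dotProduct_add]
      map_smul' := fun r M => by
        simp [Matrix.smul_mulVec, Matrix.mulVec_smul, dotProduct_smul,
          smul_eq_mul] }
  let Lc : Matrix (Fin n) (Fin n) ℝ →L[ℝ] ℝ := LinearMap.toContinuousLinearMap Lm
  have hLc : ∀ M, Lc M = c ⬝ᵥ A⁻¹.mulVec (M.mulVec v) := fun _ => rfl
  have hgderiv : ∀ t : ℝ, HasDerivAt g (φ t) t := by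
    intro t
    have h1 : HasDerivAt (fun u : ℝ => NormedSpace.exp (u • A))
        (A * NormedSpace.exp (t • A)) t := hasDerivAt_exp_smul_const' A t
    have h2 := (Lc.hasFDerivAt.comp_hasDerivAt t h1)
    have h3 : Lc (A * NormedSpace.exp (t • A)) = φ t := by
      rw [hLc, ← Matrix.mulVec_mulVec, hinv]
      rfl
    replace h2 := h2.congr_deriv h3
    exact h2
  have hgdiff : Differentiable ℝ g := fun t => (hgderiv t).differentiableAt
  have hgcont : Continuous g := hgdiff.continuous
  have hderiv_eq : ∀ t, deriv g t = φ t := fun t => (hgderiv t).deriv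
  -- φ is continuous
  have hφcont : Continuous φ := by
    let Lv : Matrix (Fin n) (Fin n) ℝ →ₗ[ℝ] ℝ :=
      { toFun := fun M => c ⬝ᵥ M.mulVec v
        map_add' := fun M₁ M₂ => by simp [Matrix.add_mulVec, dotProduct_add]
        map_smul' := fun r M => by
          simp [Matrix.smul_mulVec, dotProduct_smul, smul_eq_mul] }
    have : Continuous fun t : ℝ => (t • A : Matrix (Fin n) (Fin n) ℝ) :=
      continuous_id.smul continuous_const
    exact (LinearMap.toContinuousLinearMap Lv).continuous.comp
      (NormedSpace.exp_continuous.comp this)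
  -- g tends to 0 at infinity
  have hgtend : Tendsto g atTop (𝓝 0) := by
    let Lw : (Fin n → ℝ) →ₗ[ℝ] ℝ :=
      { toFun := fun w => c ⬝ᵥ A⁻¹.mulVec w
        map_add' := fun w₁ w₂ => by simp [Matrix.mulVec_add, dotProduct_add]
        map_smul' := fun r w => by simp [Matrix.mulVec_smul, dotProduct_smul, smul_eq_mul] }
    have h0 : (LinearMap.toContinuousLinearMap Lw) 0 = 0 := by simp
    have := ((LinearMap.toContinuousLinearMap Lw).continuous.tendsto 0).comp (hurwitz_decay hA v)
    rw [h0] at this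
    exact this
  -- g is monotone on [0, ∞)
  have hmono : MonotoneOn g (Set.Ici (0:ℝ)) := by
    apply monotoneOn_of_deriv_nonneg (convex_Ici 0) hgcont.continuousOn
      (fun t _ => (hgderiv t).differentiableAt.differentiableWithinAt)
    intro t ht
    rw [hderiv_eq]
    exact hpos t (le_of_lt (by simpa using ht))
  -- g t ≤ 0 for t ≥ 0
  have hgle : ∀ t : ℝ, 0 ≤ t → g t ≤ 0 := by
    intro t ht
    refine ge_of_tendsto hgtend ?_
    filter_upwards [eventually_ge_atTop t] with s hs
    exact hmono (Set.mem_Ici.2 ht) (Set.mem_Ici.2 (le_trans ht hs)) hs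
  -- strict increase near 0
  have hφ0 : φ 0 = c ⬝ᵥ v := by rw [hφ]; simp only; rw [hexp0, Matrix.one_mulVec]
  obtain ⟨δ, hδ0, hδ⟩ : ∃ δ > 0, ∀ t : ℝ, |t| < δ → 0 < φ t := by
    have hev0 : ∀ᶠ t in 𝓝 (0:ℝ), 0 < φ t := by
      have h1 : Tendsto φ (𝓝 0) (𝓝 (φ 0)) := hφcont.continuousAt
      exact h1.eventually (eventually_gt_nhds (by rw [hφ0]; exact hcv0))
    rw [Metric.eventually_nhds_iff] at hev0
    obtain ⟨δ, hδ0, hδ⟩ := hev0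
    exact ⟨δ, hδ0, fun t ht => hδ (by simpa [Real.dist_eq] using ht)⟩
  set ε := δ/2 with hε
  have hε0 : 0 < ε := by positivity
  have hsm : StrictMonoOn g (Set.Icc 0 ε) := by
    apply strictMonoOn_of_deriv_pos (convex_Icc 0 ε) hgcont.continuousOn
    intro t ht
    rw [interior_Icc] at ht
    rw [hderiv_eq]
    exact hδ t (by
      rw [abs_of_pos ht.1]
      have h2 := ht.2
      rw [hε] at h2
      linarith)
  have hg0lt : g 0 < g ε := hsm ⟨le_rfl, hε0.le⟩ ⟨hε0.le, le_rfl⟩ hε0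
  have hg0 : g 0 = Mv := by rw [hg]; simp only; rw [hexp0, Matrix.one_mulVec]
  have hMvneg : Mv < 0 := by
    have := hgle ε hε0.le
    rw [hg0] at hg0lt; linarith
  constructor <;> constructor <;> intro h <;> nlinarith [hstar, hcv0, hMvneg]
end

section
/- Let h : [0,∞) → ℝ be integrable with h(t) ≥ 0 for almost every t ≥ 0, and assume h is not almost everywhere zero. Define w(λ) = ∫₀^∞ h(t) e^{−λt} dt for λ ≥ 0, and assume the transversality condition w(0) ≠ 1. Then w(λ) ≠ 1 for all λ ≥ 0 if and only if w(0) < 1. (Remark 4.2(b): every real pole of the unity-feedback closed-loop transfer function is negative if and only if w(0) < 1.) -/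
open MeasureTheory Set Filter

/-- The real Laplace transform of the impulse response `h`. -/
noncomputable def laplace (h : ℝ → ℝ) (l : ℝ) : ℝ :=
  ∫ t in Set.Ioi (0:ℝ), h t * Real.exp (-(l * t))

lemma laplace_meas (h : ℝ → ℝ) (hint : IntegrableOn h (Set.Ioi (0:ℝ))) (l : ℝ) :
    AEStronglyMeasurable (fun t => h t * Real.exp (-(l * t)))
      (volume.restrict (Set.Ioi (0:ℝ))) :=
  hint.aestronglyMeasurable.mul
    ((Real.continuous_exp.comp (continuous_const.mul continuous_id).neg).aestronglyMeasurable)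

lemma laplace_bound (h : ℝ → ℝ) {l : ℝ} (hl : 0 ≤ l) :
    ∀ᵐ t ∂(volume.restrict (Set.Ioi (0:ℝ))),
      ‖h t * Real.exp (-(l * t))‖ ≤ |h t| := by
  filter_upwards [ae_restrict_mem measurableSet_Ioi] with t ht
  rw [Real.norm_eq_abs, abs_mul, abs_of_pos (Real.exp_pos _)]
  have : Real.exp (-(l * t)) ≤ 1 := by
    rw [Real.exp_le_one_iff]
    nlinarith [le_of_lt (mem_Ioi.mp ht)]
  nlinarith [abs_nonneg (h t)]

lemma laplace_integrable (h : ℝ → ℝ) (hint : IntegrableOn h (Set.Ioi (0:ℝ)))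
    {l : ℝ} (hl : 0 ≤ l) :
    IntegrableOn (fun t => h t * Real.exp (-(l * t))) (Set.Ioi (0:ℝ)) :=
  (hint.norm.mono' (laplace_meas h hint l) (laplace_bound h hl))

/-- Remark 4.2(b): under the transversality condition `w(0) ≠ 1`, every real pole of the
unity-feedback closed loop is negative (`w(λ) ≠ 1` for all `λ ≥ 0`) iff `w(0) < 1`. -/
theorem stmt15 (h : ℝ → ℝ)
    (hint : IntegrableOn h (Set.Ioi (0:ℝ)))
    (hpos : ∀ᵐ t ∂(volume.restrict (Set.Ioi (0:ℝ))), 0 ≤ h t)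
    (hne : ¬ (∀ᵐ t ∂(volume.restrict (Set.Ioi (0:ℝ))), h t = 0))
    (htrans : laplace h 0 ≠ 1) :
    (∀ l : ℝ, 0 ≤ l → laplace h l ≠ 1) ↔ laplace h 0 < 1 := by
  constructor
  · intro hall
    rcases lt_or_gt_of_ne htrans with h1 | h1
    · exact h1
    exfalso
    -- w tends to 0 at infinity
    have htend : Tendsto (laplace h) atTop (nhds 0) := by
      have := MeasureTheory.tendsto_integral_filter_of_dominated_convergence
        (μ := volume.restrict (Set.Ioi (0:ℝ))) (bound := fun t => |h t|)
        (F := fun l t => h t * Real.exp (-(l * t))) (f := fun _ => (0:ℝ)) (l := atTop)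
        (.of_forall fun l => laplace_meas h hint l)
        (by filter_upwards [eventually_ge_atTop (0:ℝ)] with l hl
            exact laplace_bound h hl)
        hint.norm
        (by filter_upwards [ae_restrict_mem measurableSet_Ioi] with t ht
            have : Tendsto (fun l : ℝ => -(l * t)) atTop atBot := by
              apply tendsto_neg_atBot_iff.mpr
              exact Tendsto.atTop_mul_const ht tendsto_id
            simpa using
              ((Real.tendsto_exp_atBot.comp this).const_mul (h t)))
      exact (by simpa using this : Tendsto (fun n : ℝ => ∫ (a : ℝ) in Ioi 0, h a * Real.exp (-(n * a))) atTop (nhds 0))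
    -- pick L with laplace h L < 1 and L ≥ 0
    obtain ⟨L, hL1, hL0⟩ :=
      ((htend.eventually (eventually_lt_nhds (by norm_num : (0:ℝ) < 1))).and
        (eventually_ge_atTop (0:ℝ))).exists
    -- continuity on [0, L]
    have hcont : ContinuousOn (laplace h) (Set.Icc 0 L) := by
      apply MeasureTheory.continuousOn_of_dominated
        (bound := fun t => |h t|)
      · intro l _; exact laplace_meas h hint l
      · intro l hl; exact laplace_bound h hl.1
      · exact hint.norm
      · exact .of_forall fun t =>
          (continuous_const.mul
            (Real.continuous_exp.comp ((continuous_id.mul continuous_const).neg))).continuousOn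
    have := intermediate_value_Icc' hL0 hcont
    have h1mem : (1:ℝ) ∈ Set.Icc (laplace h L) (laplace h 0) := ⟨hL1.le, h1.le⟩
    obtain ⟨l, hl, hval⟩ := this h1mem
    exact hall l hl.1 hval
  · intro h1 l hl
    have hle : laplace h l ≤ laplace h 0 := by
      apply MeasureTheory.integral_mono_ae (laplace_integrable h hint hl)
        (laplace_integrable h hint le_rfl)
      filter_upwards [hpos, ae_restrict_mem measurableSet_Ioi] with t h0 ht
      have he : Real.exp (-(l * t)) ≤ Real.exp (-(0 * t)) := by
        apply Real.exp_le_exp.mpr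
        nlinarith [le_of_lt (mem_Ioi.mp ht)]
      exact mul_le_mul_of_nonneg_left he h0
    exact ne_of_lt (lt_of_le_of_lt hle h1)
end

section
/- Let N be a positive natural number and let σ : Fin N → Fin N → ℤ be a symmetric sign function (σ i j = σ j i, σ i j ∈ {−1, 0, 1}, σ i i = 0), encoding the signed incidence graph whose edges are the pairs {i,j} with σ i j ≠ 0. Then the following are equivalent: (i) there exists a vertex sign assignment ε : Fin N → ℤ with ε i ∈ {−1, 1} for all i, such that σ i j = ε i · ε j whenever σ i j ≠ 0; (ii) the graph contains no negative simple cycle, i.e. there is no finite sequence of vertices v₀, v₁, …, v_L with L ≥ 1, v_L = v₀, v₀, …, v_{L−1} pairwise distinct, σ v_k v_{k+1} ≠ 0 for all k < L, and ∏_{k<L} σ v_k v_{k+1} = −1. (Combinatorial core of Proposition 2.1: a system admitting an incidence graph is monotone with respect to some orthants if and only if its incidence graph contains no negative simple cycles; condition (i) is equivalent to monotonicity with respect to the orthant determined by the signs ε.) -/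
open Finset

section Aux

variable {N : ℕ} (σ : Fin N → Fin N → ℤ)

/-- Signed walks: `SWalk σ a b s` means there is a walk from `a` to `b` of sign `s`. -/
inductive SWalk : Fin N → Fin N → ℤ → Prop
  | nil (a) : SWalk a a 1
  | cons {a b c s} : σ a b ≠ 0 → SWalk b c s → SWalk a c (σ a b * s)

variable {σ}

lemma SWalk.trans' {a b c : Fin N} {s t : ℤ} (h1 : SWalk σ a b s) (h2 : SWalk σ b c t) :
    SWalk σ a c (s * t) := by
  induction h1 with
  | nil a => simpa using h2
  | cons h w ih => rw [mul_assoc]; exact SWalk.cons h (ih h2)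

lemma SWalk.symm' (hsymm : ∀ i j, σ i j = σ j i) {a b : Fin N} {s : ℤ} (h : SWalk σ a b s) :
    SWalk σ b a s := by
  induction h with
  | nil a => exact SWalk.nil a
  | @cons a b c s h w ih =>
    have e : SWalk σ b a (σ a b) := by
      have := SWalk.cons (show σ b a ≠ 0 by rw [← hsymm]; exact h) (SWalk.nil a)
      rwa [mul_one, ← hsymm] at this
    have := ih.trans' e
    rwa [mul_comm] at this

lemma SWalk.sign (hval : ∀ i j, σ i j = -1 ∨ σ i j = 0 ∨ σ i j = 1) {a b : Fin N} {s : ℤ}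
    (h : SWalk σ a b s) : s = 1 ∨ s = -1 := by
  induction h with
  | nil a => left; rfl
  | @cons a b c s h w ih =>
    rcases hval a b with h' | h' | h'
    · rcases ih with ih | ih <;> rw [h', ih] <;> norm_num
    · exact absurd h' h
    · rcases ih with ih | ih <;> rw [h', ih] <;> norm_num

lemma SWalk.toWalk {a b : Fin N} {s : ℤ} (h : SWalk σ a b s) :
    ∃ (L : ℕ) (v : ℕ → Fin N), v 0 = a ∧ v L = b ∧
      (∀ k, k < L → σ (v k) (v (k + 1)) ≠ 0) ∧
      (∏ k ∈ Finset.range L, σ (v k) (v (k + 1))) = s := by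
  induction h with
  | nil a => exact ⟨0, fun _ => a, rfl, rfl, by omega, by simp⟩
  | @cons a b c s h w ih =>
    obtain ⟨L, v, hv0, hvL, he, hp⟩ := ih
    refine ⟨L + 1, fun m => Nat.casesOn m a v, rfl, hvL, ?_, ?_⟩
    · intro k hk
      cases k with
      | zero => simpa [hv0] using h
      | succ j => exact he j (by omega)
    · rw [Finset.prod_range_succ'
        (fun k => σ (Nat.casesOn k a v : Fin N) (Nat.casesOn (k+1) a v : Fin N)) L]
      show (∏ k ∈ Finset.range L, σ (v k) (v (k+1))) * σ a (v 0) = σ a b * s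
      rw [hv0, hp, mul_comm]

lemma prodSign (f : ℕ → ℤ) : ∀ n : ℕ, (∀ m, m < n → f m = 1 ∨ f m = -1) →
    (∏ m ∈ Finset.range n, f m) = 1 ∨ (∏ m ∈ Finset.range n, f m) = -1 := by
  intro n
  induction n with
  | zero => simp
  | succ n ih =>
    intro h
    rw [Finset.prod_range_succ]
    rcases ih (fun m hm => h m (by omega)) with h1 | h1 <;>
      rcases h n (by omega) with h2 | h2 <;> rw [h1, h2] <;> norm_num

/-- Any negative closed walk contains a negative simple cycle. -/
lemma lemA (hval : ∀ i j : Fin N, σ i j = -1 ∨ σ i j = 0 ∨ σ i j = 1) (L : ℕ) :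
    ∀ (v : ℕ → Fin N), 1 ≤ L → v L = v 0 →
    (∀ k, k < L → σ (v k) (v (k + 1)) ≠ 0) →
    (∏ k ∈ Finset.range L, σ (v k) (v (k + 1))) = -1 →
    ∃ (L' : ℕ) (v' : ℕ → Fin N), 1 ≤ L' ∧ v' L' = v' 0 ∧
      (∀ k l : ℕ, k < L' → l < L' → k ≠ l → v' k ≠ v' l) ∧
      (∀ k : ℕ, k < L' → σ (v' k) (v' (k + 1)) ≠ 0) ∧
      (∏ k ∈ Finset.range L', σ (v' k) (v' (k + 1))) = -1 := by
  induction L using Nat.strong_induction_on with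
  | _ L ih =>
  intro v h1 hc he hp
  by_cases hinj : ∀ k l, k < L → l < L → k ≠ l → v k ≠ v l
  · exact ⟨L, v, h1, hc, hinj, he, hp⟩
  push_neg at hinj
  obtain ⟨k, l, hkL, hlL, hkl, hv⟩ := hinj
  wlog hlt : k < l generalizing k l
  · exact this l k hlL hkL hkl.symm hv.symm (by omega)
  set f : ℕ → ℤ := fun m => σ (v m) (v (m + 1)) with hf
  -- first subwalk : from k to l
  set w1 : ℕ → Fin N := fun m => v (k + m) with hw1
  set L1 : ℕ := l - k with hL1
  have hL1pos : 1 ≤ L1 := by omega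
  have hL1lt : L1 < L := by omega
  have hw1c : w1 L1 = w1 0 := by
    show v (k + L1) = v (k + 0)
    rw [show k + L1 = l by omega, show k + 0 = k by omega, hv]
  have hw1e : ∀ m, m < L1 → σ (w1 m) (w1 (m + 1)) ≠ 0 := by
    intro m hm
    show σ (v (k + m)) (v (k + (m + 1))) ≠ 0
    rw [show k + (m+1) = (k + m) + 1 by omega]
    exact he (k + m) (by omega)
  have hp1 : (∏ m ∈ Finset.range L1, σ (w1 m) (w1 (m + 1))) = ∏ m ∈ Finset.Ico k l, f m := by
    rw [Finset.prod_Ico_eq_prod_range]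
    apply Finset.prod_congr (by rw [hL1])
    intro m _
    show σ (v (k + m)) (v (k + (m+1))) = σ (v (k+m)) (v ((k+m)+1))
    rw [show k + (m+1) = (k + m) + 1 by omega]
  -- second subwalk : skip [k, l)
  set w2 : ℕ → Fin N := fun m => if m ≤ k then v m else v (m + (l - k)) with hw2
  set L2 : ℕ := L - (l - k) with hL2
  set n2 : ℕ := L2 - (k + 1) with hn2
  have hL2eq : L2 = (k + 1) + n2 := by omega
  have hL2pos : 1 ≤ L2 := by omega
  have hL2lt : L2 < L := by omega
  have hw2c : w2 L2 = w2 0 := by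
    show (if L2 ≤ k then v L2 else v (L2 + (l - k))) = (if 0 ≤ k then v 0 else v (0 + (l-k)))
    rw [if_neg (by omega), if_pos (by omega), show L2 + (l - k) = L by omega, hc]
  have hg1 : ∀ m, m < k → σ (w2 m) (w2 (m + 1)) = f m := by
    intro m hm
    show (σ (if m ≤ k then v m else v (m + (l-k))) (if m + 1 ≤ k then v (m+1) else v (m+1+(l-k)))) = f m
    rw [if_pos (by omega), if_pos (by omega)]
  have hg2 : σ (w2 k) (w2 (k + 1)) = f l := by
    show (σ (if k ≤ k then v k else v (k + (l-k))) (if k + 1 ≤ k then v (k+1) else v (k+1+(l-k)))) = f l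
    rw [if_pos le_rfl, if_neg (by omega), show k + 1 + (l - k) = l + 1 by omega, hv]
  have hg3 : ∀ m, σ (w2 (k + 1 + m)) (w2 (k + 1 + m + 1)) = f (l + 1 + m) := by
    intro m
    show (σ (if k + 1 + m ≤ k then v (k+1+m) else v (k+1+m + (l-k)))
      (if k + 1 + m + 1 ≤ k then v (k+1+m+1) else v (k+1+m+1+(l-k)))) = f (l + 1 + m)
    rw [if_neg (by omega), if_neg (by omega), show k+1+m+(l-k) = l+1+m by omega,
      show k+1+m+1+(l-k) = (l+1+m)+1 by omega]
  have hw2e : ∀ m, m < L2 → σ (w2 m) (w2 (m + 1)) ≠ 0 := by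
    intro m hm
    rcases lt_trichotomy m k with h' | h' | h'
    · rw [hg1 m h']; exact he m (by omega)
    · subst h'; rw [hg2]; exact he l (by omega)
    · obtain ⟨m', rfl⟩ : ∃ m', m = k + 1 + m' := ⟨m - k - 1, by omega⟩
      rw [hg3]; exact he (l + 1 + m') (by omega)
  have hA : (∏ m ∈ Finset.range k, σ (w2 m) (w2 (m + 1))) = ∏ m ∈ Finset.range k, f m :=
    Finset.prod_congr rfl fun m hm => hg1 m (Finset.mem_range.1 hm)
  have hB : (∏ m ∈ Finset.range n2, σ (w2 (k + 1 + m)) (w2 (k + 1 + m + 1)))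
      = ∏ m ∈ Finset.Ico (l + 1) L, f m := by
    rw [Finset.prod_Ico_eq_prod_range, show L - (l+1) = n2 by omega]
    exact Finset.prod_congr rfl fun m _ => hg3 m
  have hp2 : (∏ m ∈ Finset.range L2, σ (w2 m) (w2 (m + 1)))
      = (∏ m ∈ Finset.range k, f m) * f l * ∏ m ∈ Finset.Ico (l + 1) L, f m := by
    calc (∏ m ∈ Finset.range L2, σ (w2 m) (w2 (m + 1)))
        = ∏ m ∈ Finset.range ((k+1)+n2), σ (w2 m) (w2 (m + 1)) := by rw [← hL2eq]
      _ = (∏ m ∈ Finset.range (k+1), σ (w2 m) (w2 (m + 1)))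
          * ∏ m ∈ Finset.range n2, σ (w2 (k+1+m)) (w2 (k+1+m+1)) :=
        Finset.prod_range_add _ _ _
      _ = ((∏ m ∈ Finset.range k, σ (w2 m) (w2 (m + 1))) * σ (w2 k) (w2 (k+1)))
          * ∏ m ∈ Finset.range n2, σ (w2 (k+1+m)) (w2 (k+1+m+1)) := by
        rw [Finset.prod_range_succ]
      _ = (∏ m ∈ Finset.range k, f m) * f l * ∏ m ∈ Finset.Ico (l + 1) L, f m := by
        rw [hA, hg2, hB]
  -- combine products
  have hsplit : (∏ m ∈ Finset.range L1, σ (w1 m) (w1 (m + 1)))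
      * (∏ m ∈ Finset.range L2, σ (w2 m) (w2 (m + 1))) = -1 := by
    rw [hp1, hp2, ← hp]
    have e1 : (∏ m ∈ Finset.Ico 0 k, f m) * ∏ m ∈ Finset.Ico k l, f m
        = ∏ m ∈ Finset.Ico 0 l, f m := Finset.prod_Ico_consecutive f (by omega) (by omega)
    have e2 : (∏ m ∈ Finset.Ico 0 l, f m) * ∏ m ∈ Finset.Ico l (l+1), f m
        = ∏ m ∈ Finset.Ico 0 (l+1), f m := Finset.prod_Ico_consecutive f (by omega) (by omega)
    have e3 : (∏ m ∈ Finset.Ico 0 (l+1), f m) * ∏ m ∈ Finset.Ico (l+1) L, f m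
        = ∏ m ∈ Finset.Ico 0 L, f m := Finset.prod_Ico_consecutive f (by omega) (by omega)
    have e4 : (∏ m ∈ Finset.Ico l (l+1), f m) = f l := by
      rw [Nat.Ico_succ_singleton, Finset.prod_singleton]
    simp only [← Finset.range_eq_Ico] at e1 e2 e3
    rw [← e3, ← e2, ← e1, e4]
    ring
  have hs1 : (∏ m ∈ Finset.range L1, σ (w1 m) (w1 (m + 1))) = 1
      ∨ (∏ m ∈ Finset.range L1, σ (w1 m) (w1 (m + 1))) = -1 := by
    apply prodSign
    intro m hm
    rcases hval (w1 m) (w1 (m+1)) with h' | h' | h'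
    · right; exact h'
    · exact absurd h' (hw1e m hm)
    · left; exact h'
  rcases hs1 with hs1 | hs1
  · have hs2 : (∏ m ∈ Finset.range L2, σ (w2 m) (w2 (m + 1))) = -1 := by
      rw [hs1, one_mul] at hsplit; exact hsplit
    exact ih L2 hL2lt w2 hL2pos hw2c hw2e hs2
  · exact ih L1 hL1lt w1 hL1pos hw1c hw1e hs1

end Aux

/-- Combinatorial core of Proposition 2.1: a signed incidence graph admits a vertex sign
assignment `ε` with `σ i j = ε i ε j` on all edges (equivalently, the system is monotone
with respect to the orthant determined by `ε`) if and only if the graph contains no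
negative simple cycle. -/
theorem stmt18 (N : ℕ) (hN : 0 < N) (σ : Fin N → Fin N → ℤ)
    (hsymm : ∀ i j : Fin N, σ i j = σ j i)
    (hval : ∀ i j : Fin N, σ i j = -1 ∨ σ i j = 0 ∨ σ i j = 1)
    (hdiag : ∀ i : Fin N, σ i i = 0) :
    (∃ ε : Fin N → ℤ, (∀ i : Fin N, ε i = 1 ∨ ε i = -1) ∧
        ∀ i j : Fin N, σ i j ≠ 0 → σ i j = ε i * ε j) ↔
    ¬ ∃ (L : ℕ) (v : ℕ → Fin N), 1 ≤ L ∧ v L = v 0 ∧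
        (∀ k l : ℕ, k < L → l < L → k ≠ l → v k ≠ v l) ∧
        (∀ k : ℕ, k < L → σ (v k) (v (k + 1)) ≠ 0) ∧
        (∏ k ∈ Finset.range L, σ (v k) (v (k + 1))) = -1 := by
  classical
  constructor
  · rintro ⟨ε, hε, hεe⟩ ⟨L, v, hL, hc, hinj, he, hprod⟩
    have h1 : (∏ k ∈ Finset.range L, σ (v k) (v (k + 1)))
        = (∏ k ∈ Finset.range L, ε (v k)) * ∏ k ∈ Finset.range L, ε (v (k + 1)) := by
      rw [← Finset.prod_mul_distrib]
      exact Finset.prod_congr rfl fun k hk => hεe _ _ (he k (Finset.mem_range.1 hk))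
    have h2 : (∏ k ∈ Finset.range L, ε (v (k + 1))) = ∏ k ∈ Finset.range L, ε (v k) := by
      have e1 := Finset.prod_range_succ' (fun k => ε (v k)) L
      have e2 := Finset.prod_range_succ (fun k => ε (v k)) L
      rw [hc] at e2
      have hne : ε (v 0) ≠ 0 := by rcases hε (v 0) with h | h <;> rw [h] <;> norm_num
      have := e1.symm.trans e2
      exact mul_right_cancel₀ hne this
    rw [h1, h2] at hprod
    nlinarith [mul_self_nonneg (∏ k ∈ Finset.range L, ε (v k))]
  · intro hcyc
    -- no negative closed SWalk
    have hnoneg : ∀ a : Fin N, ¬ SWalk σ a a (-1) := by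
      intro a h
      obtain ⟨L, v, hv0, hvL, he, hprodw⟩ := h.toWalk
      have hL : 1 ≤ L := by
        rcases Nat.eq_zero_or_pos L with h0 | h0
        · subst h0; simp at hprodw
        · exact h0
      obtain ⟨L', v', h1, h2, h3, h4, h5⟩ :=
        lemA hval L v hL (hvL.trans hv0.symm) he hprodw
      exact hcyc ⟨L', v', h1, h2, h3, h4, h5⟩
    have huniq : ∀ (a b : Fin N) (s t : ℤ), SWalk σ a b s → SWalk σ a b t → s = t := by
      intro a b s t h1 h2
      have hss := h1.sign hval
      have hts := h2.sign hval
      by_contra hne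
      have hclosed : SWalk σ a a (s * t) := h1.trans' (h2.symm' hsymm)
      have : s * t = -1 := by
        rcases hss with h | h <;> rcases hts with h' | h' <;> subst h <;> subst h' <;>
          first | exact absurd rfl hne | norm_num
      rw [this] at hclosed
      exact hnoneg a hclosed
    set Conn : Fin N → Fin N → Prop := fun i j => ∃ s, SWalk σ i j s with hConn
    have hrefl : ∀ i, Conn i i := fun i => ⟨1, SWalk.nil i⟩
    have hsym : ∀ i j, Conn i j → Conn j i := fun i j ⟨s, h⟩ => ⟨s, h.symm' hsymm⟩
    have htrans : ∀ i j k, Conn i j → Conn j k → Conn i k :=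
      fun i j k ⟨s, h1⟩ ⟨t, h2⟩ => ⟨s * t, h1.trans' h2⟩
    set rep : Fin N → Fin N := fun i =>
      (Finset.univ.filter fun j => Conn i j).min' ⟨i, by simp [hrefl i]⟩ with hrep
    have hconnrep : ∀ i, Conn i (rep i) := by
      intro i
      have := Finset.min'_mem (Finset.univ.filter fun j => Conn i j)
        ⟨i, by simp [hrefl i]⟩
      simpa using this
    have hrepeq : ∀ i j, Conn i j → rep i = rep j := by
      intro i j hij
      have : (Finset.univ.filter fun x => Conn i x) = Finset.univ.filter fun x => Conn j x := by
        ext x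
        simp only [Finset.mem_filter, Finset.mem_univ, true_and]
        exact ⟨fun h => htrans j i x (hsym i j hij) h, fun h => htrans i j x hij h⟩
      simp only [hrep, this]
    have hex : ∀ i, ∃ s, SWalk σ (rep i) i s := fun i => hsym i (rep i) (hconnrep i)
    refine ⟨fun i => (hex i).choose, ?_, ?_⟩
    · intro i
      exact ((hex i).choose_spec).sign hval
    · intro i j hij
      have hedge : SWalk σ i j (σ i j) := by
        have := SWalk.cons hij (SWalk.nil j)
        rwa [mul_one] at this
      have hre : rep i = rep j := hrepeq i j ⟨σ i j, hedge⟩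
      have hwj : SWalk σ (rep j) j ((hex i).choose * σ i j) := by
        rw [← hre]
        exact ((hex i).choose_spec).trans' hedge
      have := huniq (rep j) j _ _ (hex j).choose_spec hwj
      have hsq : (hex i).choose * (hex i).choose = 1 := by
        rcases ((hex i).choose_spec).sign hval with h | h <;> rw [h] <;> norm_num
      calc σ i j = 1 * σ i j := by ring
        _ = ((hex i).choose * (hex i).choose) * σ i j := by rw [hsq]
        _ = (hex i).choose * ((hex i).choose * σ i j) := by ring
        _ = (hex i).choose * (hex j).choose := by rw [← this]
end
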